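/- Let X be a topological space containing a nonempty open set U whose closure is not all of X. Then no hypermixing map on X is injective. -/
import Mathlib

theorem stmt8 {X : Type*} [TopologicalSpace X] (U : Set X)
    (hUopen : IsOpen U) (hUne : U.Nonempty) (hUcl : closure U ≠ Set.univ)
    (f : X → X)
    (hf : ∀ V : Set X, IsOpen V → V.Nonempty → (⋃ i : ℕ, ⋂ n ≥ i, f^[n] '' V) = Set.univ) :
    ¬ Function.Injective f := by
  intro hinj
  set W := (closure U)ᶜ with hW
  have hWopen : IsOpen W := isClosed_closure.isOpen_compl
  have hWne : W.Nonempty := Set.nonempty_compl.mpr hUcl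
  obtain ⟨x, -⟩ := id hUne
  have hx1 : x ∈ ⋃ i : ℕ, ⋂ n ≥ i, f^[n] '' U := by
    rw [hf U hUopen hUne]; trivial
  have hx2 : x ∈ ⋃ i : ℕ, ⋂ n ≥ i, f^[n] '' W := by
    rw [hf W hWopen hWne]; trivial
  obtain ⟨i, hi⟩ := Set.mem_iUnion.mp hx1
  obtain ⟨j, hj⟩ := Set.mem_iUnion.mp hx2
  have h1 : x ∈ f^[max i j] '' U := Set.mem_iInter₂.mp hi _ (le_max_left _ _)
  have h2 : x ∈ f^[max i j] '' W := Set.mem_iInter₂.mp hj _ (le_max_right _ _)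
  obtain ⟨u, hu, hux⟩ := h1
  obtain ⟨w, hw, hwx⟩ := h2
  have huw : u = w := hinj.iterate (max i j) (hux.trans hwx.symm)
  exact hw (huw ▸ subset_closure hu)
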